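/- Let (X,d) be a metric space equipped with a Borel probability measure μ, let f : X → X be Borel measurable, m ∈ ℕ, s ∈ ℝ, ε > 0, K > 0, and let T ⊆ X be a measurable set of diameter less than ε with a distinguished point x_T ∈ T. Suppose that for every measurable set E ⊆ X one has |μ(E)·μ(T) − μ(f^{−m}(E) ∩ T)| < ε·μ(T), and that μ(𝒜(x_T,s,ε)) ≤ K·ε. Then |μ({x ∈ T : d(x, f^m(x)) < s}) − μ({x ∈ T : d(x_T, f^m(x)) < s})| ≤ (K + 1)·ε·μ(T). -/
import Mathlib


open MeasureTheory Set

/-- Let `(X,d)` be a metric space with Borel probability measure `μ`, let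
`f : X → X` be Borel measurable, `m ∈ ℕ`, `s ∈ ℝ`, `ε > 0`, `K > 0`, and let `T ⊆ X` be a
measurable set of diameter less than `ε` with a distinguished point `x_T ∈ T`. Suppose that
`|μ(E)·μ(T) − μ(f^{−m}(E) ∩ T)| < ε·μ(T)` for every measurable `E ⊆ X`, and that
`μ(𝒜(x_T,s,ε)) ≤ K·ε`. Then
`|μ({x ∈ T : d(x, f^m(x)) < s}) − μ({x ∈ T : d(x_T, f^m(x)) < s})| ≤ (K + 1)·ε·μ(T)`. -/
theorem measure_symmDiff_estimate {X : Type*} [MeasurableSpace X] [MetricSpace X]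
    [BorelSpace X] (μ : Measure X) [IsProbabilityMeasure μ]
    (f : X → X) (hf : Measurable f) (m : ℕ) (s ε K : ℝ) (hε : 0 < ε) (hK : 0 < K)
    (T : Set X) (hTm : MeasurableSet T) (hT : EMetric.diam T < ENNReal.ofReal ε)
    (xT : X) (hxT : xT ∈ T)
    (hmix : ∀ E : Set X, MeasurableSet E →
      |(μ E).toReal * (μ T).toReal - (μ (f^[m] ⁻¹' E ∩ T)).toReal| < ε * (μ T).toReal)
    (hann : (μ {y | s - ε ≤ dist xT y ∧ dist xT y < s + ε}).toReal ≤ K * ε) :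
    |(μ {x ∈ T | dist x (f^[m] x) < s}).toReal -
        (μ {x ∈ T | dist xT (f^[m] x) < s}).toReal| ≤ (K + 1) * ε * (μ T).toReal := by
  set F := f^[m] with hF
  have hFm : Measurable F := hf.iterate m
  set Ann : Set X := {y | s - ε ≤ dist xT y ∧ dist xT y < s + ε} with hAnn
  have hAnnm : MeasurableSet Ann := by
    have hc : Continuous fun y => dist xT y := continuous_const.dist continuous_id
    have : Ann = (fun y => dist xT y) ⁻¹' Set.Ico (s - ε) (s + ε) := rfl
    rw [this]
    exact hc.measurable measurableSet_Ico
  set A : Set X := {x ∈ T | dist x (F x) < s} with hA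
  set B : Set X := {x ∈ T | dist xT (F x) < s} with hB
  set C : Set X := F ⁻¹' Ann ∩ T with hC
  -- distance from xT to any point of T is < ε
  have hdist : ∀ x ∈ T, dist x xT < ε := fun x hx => by
    have := EMetric.edist_le_diam_of_mem hx hxT
    exact edist_lt_ofReal.mp (lt_of_le_of_lt this hT)
  have hAsub : A ⊆ B ∪ C := by
    intro x hx
    rcases hx with ⟨hxT', hxd⟩
    by_cases hb : dist xT (F x) < s
    · exact Or.inl ⟨hxT', hb⟩
    · refine Or.inr ⟨⟨not_lt.mp hb |>.trans' (by linarith [hε.le]), ?_⟩, hxT'⟩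
      have := dist_triangle xT x (F x)
      have := hdist x hxT'
      calc dist xT (F x) ≤ dist xT x + dist x (F x) := dist_triangle _ _ _
        _ < ε + s := by rw [dist_comm]; linarith
        _ = s + ε := by ring
  have hBsub : B ⊆ A ∪ C := by
    intro x hx
    rcases hx with ⟨hxT', hxd⟩
    by_cases ha : dist x (F x) < s
    · exact Or.inl ⟨hxT', ha⟩
    · refine Or.inr ⟨⟨?_, by linarith [hε]⟩, hxT'⟩
      have h1 : dist x (F x) ≤ dist x xT + dist xT (F x) := dist_triangle _ _ _
      have h2 := hdist x hxT'
      have := not_lt.mp ha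
      linarith
  have hfin : ∀ S : Set X, μ S ≠ ⊤ := fun S => measure_ne_top μ S
  have hμA : μ A ≤ μ B + μ C := le_trans (measure_mono hAsub) (measure_union_le _ _)
  have hμB : μ B ≤ μ A + μ C := le_trans (measure_mono hBsub) (measure_union_le _ _)
  have hμAr : (μ A).toReal ≤ (μ B).toReal + (μ C).toReal := by
    have := ENNReal.toReal_mono (by simp [hfin]) hμA
    rwa [ENNReal.toReal_add (hfin B) (hfin C)] at this
  have hμBr : (μ B).toReal ≤ (μ A).toReal + (μ C).toReal := by
    have := ENNReal.toReal_mono (by simp [hfin]) hμB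
    rwa [ENNReal.toReal_add (hfin A) (hfin C)] at this
  have hCbound : (μ C).toReal ≤ (K + 1) * ε * (μ T).toReal := by
    have hm := hmix Ann hAnnm
    have h1 : (μ Ann).toReal * (μ T).toReal ≤ K * ε * (μ T).toReal :=
      mul_le_mul_of_nonneg_right hann ENNReal.toReal_nonneg
    rw [← hC] at hm
    have habs := abs_lt.mp hm
    nlinarith [habs.1, habs.2]
  rw [abs_sub_le_iff]
  constructor <;> linarith
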